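/- There are believable σ-satisfiable formulas on the class KD45 for every infinite binary string σ: for every function σ : ℕ⁺ → {0,1} there exist a formula ψ in the two-agent language (agents a and b) and a pointed KD45 model (N,s) such that for every n ≥ 0, N|ψ^n, s ⊨ σ_{n+1}(ψ) and N|ψ^n, s ⊨ ◇_a ψ ∧ ◇_b ψ (so the announced formula is believable for both agents at every stage of the iteration). -/
import Mathlib


inductive Form (A : Type) : Type
  | atom : ℕ → Form A
  | neg  : Form A → Form A
  | conj : Form A → Form A → Form A
  | box  : A → Form A → Form A
  | ann  : Form A → Form A → Form A
  deriving DecidableEq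

namespace Form

/-- ◇_a φ := ¬□_a¬φ -/
def dia {A : Type} (a : A) (φ : Form A) : Form A := .neg (.box a (.neg φ))

/-- φ → ψ := ¬(φ ∧ ¬ψ) -/
def imp {A : Type} (φ ψ : Form A) : Form A := .neg (.conj φ (.neg ψ))

/-- φ ∨ ψ := ¬(¬φ ∧ ¬ψ) -/
def or {A : Type} (φ ψ : Form A) : Form A := .neg (.conj (.neg φ) (.neg ψ))

/-- ⊥ := p ∧ ¬p -/
def bot {A : Type} : Form A := .conj (.atom 0) (.neg (.atom 0))

def top {A : Type} : Form A := .neg bot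

def iff {A : Type} (φ ψ : Form A) : Form A := .conj (imp φ ψ) (imp ψ φ)

end Form

/-- A Kripke model over agents `A` with state set `S`. -/
structure Model (A S : Type) where
  R : A → S → S → Prop
  V : ℕ → S → Prop

/-- Arrow elimination: keep only arrows pointing to states satisfying `P`. -/
def Model.restrict {A S : Type} (M : Model A S) (P : S → Prop) : Model A S :=
  ⟨fun a s t => M.R a s t ∧ P t, M.V⟩

/-- Satisfaction, with believed announcements interpreted by arrow elimination. -/
def Sat {A S : Type} : Model A S → Form A → S → Prop
  | M, .atom n, s => M.V n s
  | M, .neg φ, s => ¬ Sat M φ s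
  | M, .conj φ ψ, s => Sat M φ s ∧ Sat M ψ s
  | M, .box a φ, s => ∀ t : S, M.R a s t → Sat M φ t
  | M, .ann φ ψ, s => Sat (M.restrict (fun t => Sat M φ t)) ψ s

/-- K45: every accessibility relation is transitive and euclidean. -/
def isK45 {A S : Type} (M : Model A S) : Prop :=
  ∀ a : A, (∀ x y z : S, M.R a x y → M.R a y z → M.R a x z) ∧
    (∀ x y z : S, M.R a x y → M.R a x z → M.R a y z)

/-- KD45: every accessibility relation is transitive, euclidean and serial. -/
def isKD45 {A S : Type} (M : Model A S) : Prop :=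
  ∀ a : A, (∀ x y z : S, M.R a x y → M.R a y z → M.R a x z) ∧
    (∀ x y z : S, M.R a x y → M.R a x z → M.R a y z) ∧
    (∀ x : S, ∃ y : S, M.R a x y)

/-- Iterated announcement: M|φ^0 = M and M|φ^{n+1} = (M|φ^n)|φ. -/
def updIter {A S : Type} (M : Model A S) (φ : Form A) : ℕ → Model A S
  | 0 => M
  | n + 1 => (updIter M φ n).restrict (fun t => Sat (updIter M φ n) φ t)

namespace BSP

inductive St where
  | s : St
  | w : St
  | d : ℕ → St
  | g : ℕ → ℕ → St
deriving DecidableEq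

def pt : Bool → St → St
  | true, .s => .w
  | true, .w => .w
  | true, .d k => .d k
  | true, .g k h =>
      if h % 2 = 0 then (if h = 0 then .d k else .g k h)
      else (if h < k then .g k (h+1) else .g k h)
  | false, .s => .s
  | false, .w => .w
  | false, .d _ => .s
  | false, .g k h =>
      if h % 2 = 0 then .g k h
      else (if h ≤ k then .g k (h-1) else .g k h)

def val (σ : ℕ → Bool) : ℕ → St → Prop
  | 0, .g _ h => h % 2 = 0
  | 1, .g _ h => h % 2 = 1
  | 2, .d _ => True
  | 3, .d k => σ k = true
  | 4, .s => True
  | _, _ => False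

def N (σ : ℕ → Bool) : Model Bool St :=
  ⟨fun ag x y => pt ag x = pt ag y ∧ y ≠ .s, val σ⟩

def m0 : Form Bool := .atom 0
def m1 : Form Bool := .atom 1
def dA : Form Bool := .atom 2
def pA : Form Bool := .atom 3
def sA : Form Bool := .atom 4
def isM : Form Bool := Form.or m0 m1
def killEv : Form Bool := .conj m0 (.neg (Form.dia false m1))
def killOd : Form Bool := .conj m1 (.neg (Form.dia true m0))
def kill : Form Bool := Form.or killEv killOd
def fire : Form Bool := Form.dia true killEv
def sense : Form Bool := Form.dia false (.conj dA (.conj pA fire))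
def ψ : Form Bool := Form.or (.conj isM (.neg kill))
    (Form.or (.conj sA sense) (.conj (.neg isM) (.neg sA)))

def alive : St → ℕ → Prop
  | .g k h, n => n ≤ k - h
  | _, _ => True

lemma sat_or {A S : Type} (M : Model A S) (φ χ : Form A) (x : S) :
    Sat M (Form.or φ χ) x ↔ Sat M φ x ∨ Sat M χ x := by
  simp [Form.or, Sat]; tauto

lemma sat_dia {A S : Type} (M : Model A S) (a : A) (φ : Form A) (x : S) :
    Sat M (Form.dia a φ) x ↔ ∃ t, M.R a x t ∧ Sat M φ t := by
  simp [Form.dia, Sat]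

lemma sat_conj {A S : Type} (M : Model A S) (φ χ : Form A) (x : S) :
    Sat M (Form.conj φ χ) x ↔ Sat M φ x ∧ Sat M χ x := Iff.rfl

lemma sat_neg {A S : Type} (M : Model A S) (φ : Form A) (x : S) :
    Sat M (Form.neg φ) x ↔ ¬ Sat M φ x := Iff.rfl

lemma sat_atom {A S : Type} (M : Model A S) (i : ℕ) (x : S) :
    Sat M (Form.atom i) x ↔ M.V i x := Iff.rfl

def goodR (n : ℕ) (M : Model Bool St) : Prop :=
  ∀ ag x y, M.R ag x y ↔ ((pt ag x = pt ag y ∧ y ≠ St.s) ∧ alive y n)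

variable {σ : ℕ → Bool} {n : ℕ} {M : Model Bool St}

lemma dia_b_m1 (hR : goodR n M) (hV : M.V = val σ) (k h : ℕ) (he : h % 2 = 0) :
    Sat M (Form.dia false m1) (St.g k h) ↔ n < k - h := by
  rw [sat_dia]
  constructor
  · rintro ⟨t, hr, hm⟩
    rw [hR] at hr
    obtain ⟨⟨hpt, -⟩, hal⟩ := hr
    rw [m1, sat_atom, hV] at hm
    cases t with
    | g k' h' =>
      have hm' : h' % 2 = 1 := by simpa [val] using hm
      have hne : ¬ (h' % 2 = 0) := by omega
      simp only [pt, he, hne, if_true, if_false, ite_true, ite_false] at hpt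
      by_cases hle : h' ≤ k'
      · simp only [hle, ite_true, St.g.injEq] at hpt
        simp only [alive] at hal
        omega
      · simp only [hle, ite_false, St.g.injEq] at hpt
        omega
    | s => simp [val] at hm
    | w => simp [val] at hm
    | d _ => simp [val] at hm
  · intro hlt
    refine ⟨St.g k (h+1), ?_, ?_⟩
    · rw [hR]
      refine ⟨⟨?_, by simp⟩, ?_⟩
      · have h1 : ¬ ((h+1) % 2 = 0) := by omega
        have h2 : h + 1 ≤ k := by omega
        simp [pt, he, h1, h2]
      · simp only [alive]; omega
    · rw [m1, sat_atom, hV]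
      simp only [val]; omega

lemma dia_a_m0 (hR : goodR n M) (hV : M.V = val σ) (k h : ℕ) (ho : h % 2 = 1) :
    Sat M (Form.dia true m0) (St.g k h) ↔ n < k - h := by
  rw [sat_dia]
  have hne : ¬ (h % 2 = 0) := by omega
  constructor
  · rintro ⟨t, hr, hm⟩
    rw [hR] at hr
    obtain ⟨⟨hpt, -⟩, hal⟩ := hr
    rw [m0, sat_atom, hV] at hm
    cases t with
    | g k' h' =>
      have hm' : h' % 2 = 0 := by simpa [val] using hm
      simp only [pt, hne, hm', if_true, if_false, ite_true, ite_false] at hpt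
      by_cases hlt : h < k
      · by_cases hz : h' = 0
        · simp [hlt, hz] at hpt
        · simp [hlt, hz] at hpt
          simp only [alive] at hal
          omega
      · by_cases hz : h' = 0
        · simp [hlt, hz] at hpt
        · simp [hlt, hz] at hpt
          omega
    | s => simp [val] at hm
    | w => simp [val] at hm
    | d _ => simp [val] at hm
  · intro hlt
    have hk : h < k := by omega
    refine ⟨St.g k (h+1), ?_, ?_⟩
    · rw [hR]
      refine ⟨⟨?_, by simp⟩, ?_⟩
      · have h1 : (h+1) % 2 = 0 := by omega
        have h2 : ¬ (h + 1 = 0) := by omega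
        simp [pt, h1, h2, hne, hk]
      · simp only [alive]; omega
    · rw [m0, sat_atom, hV]
      simp only [val]; omega

lemma satG (hR : goodR n M) (hV : M.V = val σ) (k h : ℕ) :
    Sat M ψ (St.g k h) ↔ n < k - h := by
  rcases Nat.mod_two_eq_zero_or_one h with he | ho
  · have h1 := dia_b_m1 (σ := σ) hR hV k h he
    rw [m1] at h1
    simp only [ψ, kill, isM, killEv, killOd, sat_or, sat_conj, sat_neg, sat_atom, hV, m0, m1, sA]
    rw [h1]
    simp [val, he]
    omega
  · have h1 := dia_a_m0 (σ := σ) hR hV k h ho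
    rw [m0] at h1
    have hne : ¬ (h % 2 = 0) := by omega
    simp only [ψ, kill, isM, killEv, killOd, sat_or, sat_conj, sat_neg, sat_atom, hV, m0, m1, sA]
    rw [h1]
    simp [val, ho, hne]
    omega

lemma satW (hV : M.V = val σ) : Sat M ψ St.w := by
  simp [ψ, isM, sat_or, sat_conj, sat_neg, sat_atom, m0, m1, sA, hV, val]

lemma satD (hV : M.V = val σ) (k : ℕ) : Sat M ψ (St.d k) := by
  simp [ψ, isM, sat_or, sat_conj, sat_neg, sat_atom, m0, m1, sA, hV, val]

lemma satFire (hR : goodR n M) (hV : M.V = val σ) (j : ℕ) :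
    Sat M fire (St.d j) ↔ n = j := by
  rw [fire, sat_dia]
  constructor
  · rintro ⟨t, hr, hk⟩
    rw [hR] at hr
    obtain ⟨⟨hpt, hns⟩, hal⟩ := hr
    rw [killEv, sat_conj, sat_neg, m0, sat_atom, hV] at hk
    obtain ⟨hm0, hnd⟩ := hk
    cases t with
    | s => exact absurd rfl hns
    | w => simp [val] at hm0
    | d k' => simp [val] at hm0
    | g k' h' =>
      have he : h' % 2 = 0 := by simpa [val] using hm0
      rw [dia_b_m1 hR hV k' h' he] at hnd
      simp only [pt, he, ite_true] at hpt
      by_cases hz : h' = 0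
      · subst hz
        simp only [ite_true, St.d.injEq] at hpt
        have hj : k' = j := by simpa [pt] using hpt.symm
        subst hj
        simp only [alive] at hal
        omega
      · simp [pt, hz] at hpt
  · rintro rfl
    refine ⟨St.g n 0, ?_, ?_⟩
    · rw [hR]
      exact ⟨⟨by simp [pt], by simp⟩, by simp [alive]⟩
    · rw [killEv, sat_conj, sat_neg, m0, sat_atom, hV,
        dia_b_m1 hR hV n 0 (by omega)]
      exact ⟨by simp [val], by omega⟩

lemma satSense (hR : goodR n M) (hV : M.V = val σ) : Sat M sense St.s ↔ σ n = true := by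
  rw [sense, sat_dia]
  constructor
  · rintro ⟨t, hr, hc⟩
    rw [sat_conj, sat_conj, dA, pA, sat_atom, sat_atom, hV] at hc
    obtain ⟨h2, h3, hf⟩ := hc
    cases t with
    | s => simp [val] at h2
    | w => simp [val] at h2
    | g _ _ => simp [val] at h2
    | d k' =>
        rw [satFire hR hV] at hf
        subst hf
        simpa [val] using h3
  · intro hσ
    refine ⟨St.d n, ?_, ?_⟩
    · rw [hR]
      exact ⟨⟨rfl, by simp⟩, trivial⟩
    · rw [sat_conj, sat_conj, dA, pA, sat_atom, sat_atom, hV]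
      exact ⟨by simp [val], by simpa [val] using hσ, (satFire hR hV n).2 rfl⟩

lemma satS (hR : goodR n M) (hV : M.V = val σ) : Sat M ψ St.s ↔ σ n = true := by
  have h1 := satSense (σ := σ) hR hV
  simp only [ψ, isM, sat_or, sat_conj, sat_neg, sat_atom, hV, m0, m1, sA]
  rw [h1]
  simp [val]

lemma updV (σ : ℕ → Bool) (φ : Form Bool) : ∀ n, (updIter (N σ) φ n).V = val σ
  | 0 => rfl
  | n + 1 => by
      rw [updIter]
      exact updV σ φ n

lemma Rchar (σ : ℕ → Bool) : ∀ n, goodR n (updIter (N σ) ψ n)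
  | 0 => by
      intro ag x y
      show (N σ).R ag x y ↔ _
      cases y <;> simp [N, alive]
  | n + 1 => by
      have IH := Rchar σ n
      have hV := updV σ ψ n
      intro ag x y
      show (updIter (N σ) ψ n).R ag x y ∧ Sat (updIter (N σ) ψ n) ψ y ↔ _
      rw [IH]
      constructor
      · rintro ⟨⟨hN, hal⟩, hsat⟩
        refine ⟨hN, ?_⟩
        cases y with
        | s => exact absurd rfl hN.2
        | w => trivial
        | d k => trivial
        | g k h =>
          have := (satG IH hV k h).1 hsat
          simp only [alive]
          omega
      · rintro ⟨hN, hal⟩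
        cases y with
        | s => exact absurd rfl hN.2
        | w => exact ⟨⟨hN, trivial⟩, satW hV⟩
        | d k => exact ⟨⟨hN, trivial⟩, satD hV k⟩
        | g k h =>
          simp only [alive] at hal ⊢
          exact ⟨⟨hN, by omega⟩, (satG IH hV k h).2 (by omega)⟩

lemma kd45 (σ : ℕ → Bool) : isKD45 (N σ) := by
  intro ag
  refine ⟨?_, ?_, ?_⟩
  · rintro x y z ⟨h1, -⟩ ⟨h3, h4⟩
    exact ⟨h1.trans h3, h4⟩
  · rintro x y z ⟨h1, -⟩ ⟨h3, h4⟩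
    exact ⟨h1.symm.trans h3, h4⟩
  · intro x
    cases x with
    | s =>
        cases ag with
        | true => exact ⟨.w, rfl, by simp⟩
        | false => exact ⟨.d 0, rfl, by simp⟩
    | w => exact ⟨.w, rfl, by simp⟩
    | d k => exact ⟨.d k, rfl, by simp⟩
    | g k h => exact ⟨.g k h, rfl, by simp⟩

end BSP

/-- There are believable σ-satisfiable formulas on KD45 for every infinite binary
string σ (σ n encodes σ_{n+1}, with true = 1): there are a two-agent formula ψ
(agents are the two elements of Bool) and a pointed KD45 model (N,s) such that
for every n, N|ψ^n, s ⊨ σ_{n+1}(ψ) and N|ψ^n, s ⊨ ◇_a ψ ∧ ◇_b ψ. -/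
theorem believable_sigma_satisfiable_on_KD45 (σ : ℕ → Bool) :
    ∃ (ψ : Form Bool) (S : Type) (N : Model Bool S) (s : S),
      isKD45 N ∧
      ∀ n : ℕ,
        Sat (updIter N ψ n) (if σ n then ψ else Form.neg ψ) s ∧
        Sat (updIter N ψ n) (Form.conj (Form.dia true ψ) (Form.dia false ψ)) s := by
  refine ⟨BSP.ψ, BSP.St, BSP.N σ, BSP.St.s, BSP.kd45 σ, fun n => ?_⟩
  have hR := BSP.Rchar σ n
  have hV := BSP.updV σ BSP.ψ n
  have hs := BSP.satS hR hV
  constructor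
  · cases hσ : σ n with
    | true =>
        rw [if_pos rfl]
        exact hs.2 hσ
    | false =>
        rw [if_neg (by simp)]
        rw [BSP.sat_neg]
        intro hc
        rw [hs] at hc
        simp [hσ] at hc
  · refine ⟨?_, ?_⟩
    · rw [BSP.sat_dia]
      exact ⟨.w, (hR _ _ _).2 ⟨⟨rfl, by simp⟩, trivial⟩, BSP.satW hV⟩
    · rw [BSP.sat_dia]
      exact ⟨.d 0, (hR _ _ _).2 ⟨⟨rfl, by simp⟩, trivial⟩, BSP.satD hV 0⟩
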